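/- Assume the Slater condition: there exist ζ > 0 and p̄ ∈ D̃(γ, q) such that |K|·T_s·(γ^c_i + ζ) ≤ Σ_{k∈N(i)} Σ_τ r_{ki}·p̄^c_{ki}(τ) − B^c_i(Γ^c_i, p̄) for all (i,c) ∈ S. Let γ' = (γ'^c_i) satisfy γ'^c_i ≤ γ^c_i for all (i,c) ∈ S, let p' be any maximizer of h over D̃(γ', q), and let p^MDP be any maximizer of h over D̃(γ, q). Then h(p') − h(p^MDP) ≤ K₃ · Σ_{(i,c)∈S} |γ'^c_i − γ^c_i|, where K₃ = ‖Q‖_∞·|K|·T_s/ζ + V·(f_max − f_min)/ζ. -/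

import Mathlib

open Finset
open scoped Classical

noncomputable section

/-- For `θ : A → [0,1]`, `p̂_a = max{θ_a, 1 − θ_a}`. -/
def phat {ι : Type*} (θ : ι → ℝ) (a : ι) : ℝ :=
  max (θ a) (1 - θ a)

/-- Protection term `B(Γ, θ)`: the maximum over pairs `(S₀, a₀)` with
`S₀ ⊆ A`, `|S₀| = ⌊Γ⌋`, `a₀ ∈ A \ S₀`, of
`Σ_{a∈S₀} p̂_a + (Γ − ⌊Γ⌋)·p̂_{a₀}`. -/
def protB {ι : Type*} [Fintype ι] (Γ : ℝ) (θ : ι → ℝ) : ℝ :=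
  sSup {x : ℝ | ∃ (S : Finset ι) (a₀ : ι), S.card = Nat.floor Γ ∧ a₀ ∉ S ∧
    x = (∑ a ∈ S, phat θ a) + (Γ - (Nat.floor Γ : ℝ)) * phat θ a₀}

/-- Upper tail `P(Σ_a y_a > m)` of a Poisson Binomial sum of independent
Bernoulli variables with success probabilities `θ_a`. -/
def pbTail {ι : Type*} [Fintype ι] [DecidableEq ι] (θ : ι → ℝ) (m : ℝ) : ℝ :=
  ∑ T ∈ Finset.univ.powerset.filter (fun T : Finset ι => m < (T.card : ℝ)),
    (∏ a ∈ T, θ a) * ∏ a ∈ Tᶜ, (1 - θ a)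

/-- The box constraint `p ∈ [0,1]^{T_s·|E|·|C|}`. -/
def inBox {K I C : Type*} (Ts : ℕ) (p : K → I → C → Fin Ts → ℝ) : Prop :=
  ∀ k i c τ, p k i c τ ∈ Set.Icc (0 : ℝ) 1

/-- Constraint (P1): each provider `k` serves exactly one (client, job type)
pair per slot, `Σ_{c∈C} Σ_{i∈N(k)} p^c_{ki}(τ) = 1`, where
`N(k) = {i : k ∈ N(i)}`. -/
def consP1 {K I C : Type*} [Fintype K] [Fintype I] [Fintype C]
    (N : I → Finset K) {Ts : ℕ} (p : K → I → C → Fin Ts → ℝ) : Prop :=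
  ∀ (k : K) (τ : Fin Ts),
    (∑ c, ∑ i ∈ Finset.univ.filter (fun i => k ∈ N i), p k i c τ) = 1

/-- Constraint (P2): the transmission-rate constraint
`Σ_{c∈C} Σ_{k∈N(i)} p^c_{ki}(τ) ≤ U_i`. -/
def consP2 {K I C : Type*} [Fintype C]
    (N : I → Finset K) (U : I → ℝ) {Ts : ℕ} (p : K → I → C → Fin Ts → ℝ) : Prop :=
  ∀ (i : I) (τ : Fin Ts), (∑ c, ∑ k ∈ N i, p k i c τ) ≤ U i

/-- `Γ^c_i = sqrt(2·|K|·T_s·log(1/(1 − q^c_i)))`. -/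
def GamQoS (nK Ts : ℕ) (qic : ℝ) : ℝ :=
  Real.sqrt (2 * (nK : ℝ) * (Ts : ℝ) * Real.log (1 / (1 - qic)))

/-- The Bernoulli success probabilities `θ_{(k,τ)} = r_{ki}·p^c_{ki}(τ)` on the
index set `A = N(i) × {0,…,T_s−1}`. -/
def thetaOf {K I C : Type*} (N : I → Finset K) {Ts : ℕ} (r : K → I → ℝ)
    (p : K → I → C → Fin Ts → ℝ) (i : I) (c : C) :
    {k // k ∈ N i} × Fin Ts → ℝ :=
  fun kt => r kt.1.1 i * p kt.1.1 i c kt.2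

/-- The protection term `B^c_i(Γ^c_i, p)` of client `i`, job type `c`. -/
def Bci {K I C : Type*} [Fintype K] [DecidableEq K] (N : I → Finset K)
    {Ts : ℕ} (r : K → I → ℝ) (q : I → C → ℝ)
    (p : K → I → C → Fin Ts → ℝ) (i : I) (c : C) : ℝ :=
  protB (GamQoS (Fintype.card K) Ts (q i c)) (thetaOf N r p i c)

/-- The linearized feasible domain `D̃(γ, q)`: box, (P1), (P2), and
`|K|·T_s·γ^c_i ≤ Σ_{k∈N(i)} Σ_τ r_{ki}·p^c_{ki}(τ) − B^c_i(Γ^c_i, p)` for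
every `(i,c)` with `q^c_i > 0`. -/
def Dtilde {K I C : Type*} [Fintype K] [Fintype I] [Fintype C] [DecidableEq K]
    (N : I → Finset K) (Ts : ℕ) (r : K → I → ℝ) (U : I → ℝ)
    (γ q : I → C → ℝ) : Set (K → I → C → Fin Ts → ℝ) :=
  {p | inBox Ts p ∧ consP1 N p ∧ consP2 N U p ∧
    ∀ i c, 0 < q i c →
      (Fintype.card K : ℝ) * Ts * γ i c ≤
        (∑ k ∈ N i, ∑ τ : Fin Ts, r k i * p k i c τ) - Bci N r q p i c}

/-- The feasible domain `D(γ, q)`: box, (P1), (P2), and the probabilistic QoS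
constraint `P(μ^c_i > |K|·T_s·γ^c_i) ≥ q^c_i` for every `(i,c)` with
`q^c_i > 0`, where `μ^c_i` is the Poisson Binomial service. -/
def Dset {K I C : Type*} [Fintype K] [Fintype I] [Fintype C] [DecidableEq K]
    (N : I → Finset K) (Ts : ℕ) (r : K → I → ℝ) (U : I → ℝ)
    (γ q : I → C → ℝ) : Set (K → I → C → Fin Ts → ℝ) :=
  {p | inBox Ts p ∧ consP1 N p ∧ consP2 N U p ∧
    ∀ i c, 0 < q i c →
      q i c ≤ pbTail (thetaOf N r p i c) ((Fintype.card K : ℝ) * Ts * γ i c)}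

/-- The drift-plus-penalty objective
`h(p) = Σ_{i,c} Q^c_i·(Σ_τ Σ_{k∈N(i)} r_{ki}·p^c_{ki}(τ)) + V·f(p)`. -/
def hobj {K I C : Type*} [Fintype I] [Fintype C] (N : I → Finset K) {Ts : ℕ}
    (r : K → I → ℝ) (Q : I → C → ℝ) (V : ℝ)
    (f : (K → I → C → Fin Ts → ℝ) → ℝ) (p : K → I → C → Fin Ts → ℝ) : ℝ :=
  (∑ i, ∑ c, Q i c * (∑ τ : Fin Ts, ∑ k ∈ N i, r k i * p k i c τ)) + V * f p

section AuxLemmas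

variable {ι : Type*} [Fintype ι]

lemma phat_nonneg' (θ : ι → ℝ) (a : ι) : 0 ≤ phat θ a := by
  unfold phat
  rcases le_total (θ a) 0 with h | h
  · exact le_trans (by linarith) (le_max_right _ _)
  · exact le_trans h (le_max_left _ _)

lemma phat_le_one' {θ : ι → ℝ} {a : ι} (h0 : 0 ≤ θ a) (h1 : θ a ≤ 1) : phat θ a ≤ 1 :=
  max_le h1 (by linarith)

lemma phat_combo {θ₁ θ₂ : ι → ℝ} {lam : ℝ} (h0 : 0 ≤ lam) (h1 : lam ≤ 1) (a : ι) :
    phat (fun b => (1 - lam) * θ₁ b + lam * θ₂ b) a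
      ≤ (1 - lam) * phat θ₁ a + lam * phat θ₂ a := by
  have h1l : (0:ℝ) ≤ 1 - lam := by linarith
  have a1 := mul_le_mul_of_nonneg_left (le_max_left (θ₁ a) (1 - θ₁ a)) h1l
  have a2 := mul_le_mul_of_nonneg_left (le_max_right (θ₁ a) (1 - θ₁ a)) h1l
  have b1 := mul_le_mul_of_nonneg_left (le_max_left (θ₂ a) (1 - θ₂ a)) h0
  have b2 := mul_le_mul_of_nonneg_left (le_max_right (θ₂ a) (1 - θ₂ a)) h0
  simp only [phat]
  exact max_le (by linarith) (by linarith)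

/-- The defining set of `protB`. -/
def protSet (Γ : ℝ) (θ : ι → ℝ) : Set ℝ :=
  {x : ℝ | ∃ (S : Finset ι) (a₀ : ι), S.card = Nat.floor Γ ∧ a₀ ∉ S ∧
    x = (∑ a ∈ S, phat θ a) + (Γ - (Nat.floor Γ : ℝ)) * phat θ a₀}

lemma protB_eq (Γ : ℝ) (θ : ι → ℝ) : protB Γ θ = sSup (protSet Γ θ) := rfl

lemma protSet_mem_le {Γ : ℝ} {θ : ι → ℝ} (hθ : ∀ a, θ a ∈ Set.Icc (0:ℝ) 1) {x : ℝ}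
    (hx : x ∈ protSet Γ θ) : x ≤ (Nat.floor Γ : ℝ) + 1 := by
  obtain ⟨S, a₀, hS, -, rfl⟩ := hx
  have h1 : ∑ a ∈ S, phat θ a ≤ (S.card : ℝ) := by
    calc ∑ a ∈ S, phat θ a ≤ ∑ _a ∈ S, (1:ℝ) :=
          Finset.sum_le_sum fun a _ => phat_le_one' (hθ a).1 (hθ a).2
      _ = S.card := by simp
  have h2 : (Γ - (Nat.floor Γ : ℝ)) * phat θ a₀ ≤ 1 := by
    rcases le_total (Γ - (Nat.floor Γ : ℝ)) 0 with h | h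
    · exact le_trans (mul_nonpos_of_nonpos_of_nonneg h (phat_nonneg' θ a₀)) zero_le_one
    · have hlt : Γ < Nat.floor Γ + 1 := Nat.lt_floor_add_one Γ
      have hp1 := phat_le_one' (hθ a₀).1 (hθ a₀).2
      have hp0 := phat_nonneg' θ a₀
      nlinarith
  rw [hS] at h1
  linarith

lemma protSet_bddAbove {Γ : ℝ} {θ : ι → ℝ} (hθ : ∀ a, θ a ∈ Set.Icc (0:ℝ) 1) :
    BddAbove (protSet Γ θ) :=
  ⟨(Nat.floor Γ : ℝ) + 1, fun _ hx => protSet_mem_le hθ hx⟩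

lemma protSet_nonempty {Γ : ℝ} (θ : ι → ℝ) (hcard : Nat.floor Γ + 1 ≤ Fintype.card ι) :
    (protSet Γ θ).Nonempty := by
  obtain ⟨S, -, hScard⟩ := Finset.exists_subset_card_eq (s := (Finset.univ : Finset ι)) (n := Nat.floor Γ)
    (by simpa using Nat.le_of_succ_le hcard)
  have hc : Sᶜ.Nonempty := by
    rw [← Finset.card_pos, Finset.card_compl, hScard]
    omega
  obtain ⟨a₀, ha₀⟩ := hc
  exact ⟨_, S, a₀, hScard, Finset.mem_compl.mp ha₀, rfl⟩

lemma protSet_mem_nonneg {Γ : ℝ} (hΓ : 0 ≤ Γ) {θ : ι → ℝ} {x : ℝ}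
    (hx : x ∈ protSet Γ θ) : 0 ≤ x := by
  obtain ⟨S, a₀, -, -, rfl⟩ := hx
  have h1 : 0 ≤ ∑ a ∈ S, phat θ a := Finset.sum_nonneg fun a _ => phat_nonneg' θ a
  have h2 : (0:ℝ) ≤ Γ - (Nat.floor Γ : ℝ) := by
    have := Nat.floor_le hΓ
    linarith
  have := mul_nonneg h2 (phat_nonneg' θ a₀)
  linarith

lemma protB_nonneg {Γ : ℝ} (hΓ : 0 ≤ Γ) {θ : ι → ℝ} (hθ : ∀ a, θ a ∈ Set.Icc (0:ℝ) 1)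
    (hcard : Nat.floor Γ + 1 ≤ Fintype.card ι) : 0 ≤ protB Γ θ := by
  obtain ⟨x, hx⟩ := protSet_nonempty θ hcard
  exact le_trans (protSet_mem_nonneg hΓ hx) (le_csSup (protSet_bddAbove hθ) hx)

lemma protB_combo {Γ : ℝ} (hΓ : 0 ≤ Γ) (hcard : Nat.floor Γ + 1 ≤ Fintype.card ι)
    {θ₁ θ₂ : ι → ℝ} (hθ₁ : ∀ a, θ₁ a ∈ Set.Icc (0:ℝ) 1) (hθ₂ : ∀ a, θ₂ a ∈ Set.Icc (0:ℝ) 1)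
    {lam : ℝ} (h0 : 0 ≤ lam) (h1 : lam ≤ 1) :
    protB Γ (fun b => (1 - lam) * θ₁ b + lam * θ₂ b)
      ≤ (1 - lam) * protB Γ θ₁ + lam * protB Γ θ₂ := by
  have hB1 := protB_nonneg hΓ hθ₁ hcard
  have hB2 := protB_nonneg hΓ hθ₂ hcard
  rw [protB_eq]
  apply Real.sSup_le
  · rintro x ⟨S, a₀, hS, ha, rfl⟩
    have e1 : (∑ a ∈ S, phat θ₁ a) + (Γ - (Nat.floor Γ : ℝ)) * phat θ₁ a₀ ≤ protB Γ θ₁ :=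
      le_csSup (protSet_bddAbove hθ₁) ⟨S, a₀, hS, ha, rfl⟩
    have e2 : (∑ a ∈ S, phat θ₂ a) + (Γ - (Nat.floor Γ : ℝ)) * phat θ₂ a₀ ≤ protB Γ θ₂ :=
      le_csSup (protSet_bddAbove hθ₂) ⟨S, a₀, hS, ha, rfl⟩
    have hfrac : (0:ℝ) ≤ Γ - (Nat.floor Γ : ℝ) := by
      have := Nat.floor_le hΓ; linarith
    have hsum : ∑ a ∈ S, phat (fun b => (1 - lam) * θ₁ b + lam * θ₂ b) a
        ≤ (1 - lam) * (∑ a ∈ S, phat θ₁ a) + lam * (∑ a ∈ S, phat θ₂ a) := by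
      calc ∑ a ∈ S, phat (fun b => (1 - lam) * θ₁ b + lam * θ₂ b) a
          ≤ ∑ a ∈ S, ((1 - lam) * phat θ₁ a + lam * phat θ₂ a) :=
            Finset.sum_le_sum fun a _ => phat_combo h0 h1 a
        _ = (1 - lam) * (∑ a ∈ S, phat θ₁ a) + lam * (∑ a ∈ S, phat θ₂ a) := by
            rw [Finset.sum_add_distrib, Finset.mul_sum, Finset.mul_sum]
    have htail : (Γ - (Nat.floor Γ : ℝ)) * phat (fun b => (1 - lam) * θ₁ b + lam * θ₂ b) a₀
        ≤ (1 - lam) * ((Γ - (Nat.floor Γ : ℝ)) * phat θ₁ a₀)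
          + lam * ((Γ - (Nat.floor Γ : ℝ)) * phat θ₂ a₀) := by
      have := mul_le_mul_of_nonneg_left (phat_combo h0 h1 a₀ (θ₁ := θ₁) (θ₂ := θ₂)) hfrac
      nlinarith [this]
    have s1 : (1 - lam) * ((∑ a ∈ S, phat θ₁ a) + (Γ - (Nat.floor Γ : ℝ)) * phat θ₁ a₀)
        ≤ (1 - lam) * protB Γ θ₁ := mul_le_mul_of_nonneg_left e1 (by linarith)
    have s2 : lam * ((∑ a ∈ S, phat θ₂ a) + (Γ - (Nat.floor Γ : ℝ)) * phat θ₂ a₀)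
        ≤ lam * protB Γ θ₂ := mul_le_mul_of_nonneg_left e2 h0
    nlinarith [hsum, htail, s1, s2]
  · nlinarith [hB1, hB2, h0, h1]

/-- Swapping a sum over `i` then `k ∈ N i` into a sum over `k` then `i` with `k ∈ N i`. -/
lemma sum_swap_mem {I K : Type*} [Fintype I] [Fintype K] (N : I → Finset K) (F : I → K → ℝ) :
    ∑ i, ∑ k ∈ N i, F i k
      = ∑ k, ∑ i ∈ Finset.univ.filter (fun i => k ∈ N i), F i k := by
  classical
  simp only [Finset.sum_filter]
  rw [Finset.sum_comm]
  refine Finset.sum_congr rfl fun i _ => ?_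
  rw [Finset.sum_ite_mem, Finset.univ_inter]

lemma combo_sum {α : Type*} (s : Finset α) (lam : ℝ) (f g : α → ℝ) :
    ∑ a ∈ s, ((1 - lam) * f a + lam * g a)
      = (1 - lam) * ∑ a ∈ s, f a + lam * ∑ a ∈ s, g a := by
  rw [Finset.sum_add_distrib, Finset.mul_sum, Finset.mul_sum]

end AuxLemmas

set_option maxHeartbeats 2000000 in
/-- **Objective gap under perturbation of the delivery ratios** (Lemma 6).
Under the Slater condition for `D̃(γ, q)`, if `γ' ≤ γ` on `S`, `p'` maximizes
`h` over `D̃(γ', q)` and `p^MDP` maximizes `h` over `D̃(γ, q)`, then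
`h(p') − h(p^MDP) ≤ K₃·Σ_{(i,c)∈S} |γ'^c_i − γ^c_i|` with
`K₃ = ‖Q‖_∞·|K|·T_s/ζ + V·(f_max − f_min)/ζ`. -/
theorem stmt6 {K I C : Type*} [Fintype K] [Fintype I] [Fintype C]
    [Nonempty K] [Nonempty I] [Nonempty C] [DecidableEq K]
    (N : I → Finset K) (hN : ∀ i, (N i).Nonempty)
    (Ts : ℕ) (hTs : 1 ≤ Ts)
    (r : K → I → ℝ) (hr : ∀ i, ∀ k ∈ N i, 0 < r k i ∧ r k i < 1)
    (U : I → ℝ) (hU : ∀ i, 0 < U i)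
    (γ q : I → C → ℝ)
    (hγ : ∀ i c, γ i c ∈ Set.Ioo (0 : ℝ) 1) (hq : ∀ i c, q i c ∈ Set.Ico (0 : ℝ) 1)
    (hfloor : ∀ i c, 0 < q i c →
      Nat.floor (GamQoS (Fintype.card K) Ts (q i c)) + 1 ≤ (N i).card * Ts)
    -- utility function
    (f : (K → I → C → Fin Ts → ℝ) → ℝ) (fmin fmax : ℝ)
    (hfcont : ContinuousOn f {p | inBox Ts p})
    (hfconc : ConcaveOn ℝ {p | inBox Ts p} f)
    (hfbdd : ∀ p, inBox Ts p → f p ∈ Set.Icc fmin fmax)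
    -- queues and penalty weight
    (Q : I → C → ℝ) (hQ : ∀ i c, 0 ≤ Q i c)
    (Qmax : ℝ) (hQmax : IsGreatest {x : ℝ | ∃ i c, x = Q i c} Qmax)
    (V : ℝ) (hV : 0 < V)
    -- Slater condition (Assumption 1) for D̃(γ, q)
    (ζ : ℝ) (hζ : 0 < ζ)
    (pbar : K → I → C → Fin Ts → ℝ) (hpbar : pbar ∈ Dtilde N Ts r U γ q)
    (hslater : ∀ i c, 0 < q i c →
      (Fintype.card K : ℝ) * Ts * (γ i c + ζ) ≤
        (∑ k ∈ N i, ∑ τ : Fin Ts, r k i * pbar k i c τ) - Bci N r q pbar i c)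
    -- the perturbed parameter vector
    (γ' : I → C → ℝ) (hγ'le : ∀ i c, 0 < q i c → γ' i c ≤ γ i c)
    -- maximizers
    (p' : K → I → C → Fin Ts → ℝ) (hp' : p' ∈ Dtilde N Ts r U γ' q)
    (hp'max : ∀ p ∈ Dtilde N Ts r U γ' q, hobj N r Q V f p ≤ hobj N r Q V f p')
    (pMDP : K → I → C → Fin Ts → ℝ) (hpMDP : pMDP ∈ Dtilde N Ts r U γ q)
    (hpMDPmax : ∀ p ∈ Dtilde N Ts r U γ q, hobj N r Q V f p ≤ hobj N r Q V f pMDP) :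
    hobj N r Q V f p' - hobj N r Q V f pMDP ≤
      (Qmax * (Fintype.card K : ℝ) * Ts / ζ + V * (fmax - fmin) / ζ) *
        ∑ ic : I × C, (if 0 < q ic.1 ic.2 then |γ' ic.1 ic.2 - γ ic.1 ic.2| else 0) := by
  obtain ⟨hbox', hP1', hP2', hqos'⟩ := hp'
  obtain ⟨hboxb, hP1b, hP2b, hqosb⟩ := hpbar
  set Δ : ℝ := ∑ ic : I × C, (if 0 < q ic.1 ic.2 then |γ' ic.1 ic.2 - γ ic.1 ic.2| else 0)
    with hΔdef
  have hΔ0 : 0 ≤ Δ := Finset.sum_nonneg fun ic _ => by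
    by_cases h : 0 < q ic.1 ic.2 <;> simp [h, abs_nonneg]
  have hden : 0 < Δ + ζ := by linarith
  set lam : ℝ := Δ / (Δ + ζ) with hlamdef
  have hl0 : 0 ≤ lam := div_nonneg hΔ0 hden.le
  have hl1 : lam ≤ 1 := by rw [hlamdef, div_le_one hden]; linarith
  have hlameq : lam * (Δ + ζ) = Δ := div_mul_cancel₀ _ hden.ne'
  set pl : K → I → C → Fin Ts → ℝ :=
    fun k i c τ => (1 - lam) * p' k i c τ + lam * pbar k i c τ with hpl
  -- feasibility of the convex combination in D̃(γ, q)
  have hboxl : inBox Ts pl := by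
    intro k i c τ
    have h1 := hbox' k i c τ
    have h2 := hboxb k i c τ
    simp only [Set.mem_Icc] at h1 h2 ⊢
    simp only [hpl]
    constructor
    · nlinarith [h1.1, h2.1]
    · nlinarith [h1.2, h2.2]
  have hP1l : consP1 N pl := by
    intro k τ
    have h1 := hP1' k τ
    have h2 := hP1b k τ
    simp only [hpl, combo_sum]
    rw [h1, h2]; ring
  have hP2l : consP2 N U pl := by
    intro i τ
    have e : ∑ c, ∑ k ∈ N i, pl k i c τ
        = (1 - lam) * (∑ c, ∑ k ∈ N i, p' k i c τ)
          + lam * (∑ c, ∑ k ∈ N i, pbar k i c τ) := by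
      simp only [hpl, combo_sum]
    rw [e]
    nlinarith [mul_le_mul_of_nonneg_left (hP2' i τ) (show (0:ℝ) ≤ 1 - lam by linarith),
      mul_le_mul_of_nonneg_left (hP2b i τ) hl0]
  have hqosl : ∀ i c, 0 < q i c →
      (Fintype.card K : ℝ) * Ts * γ i c ≤
        (∑ k ∈ N i, ∑ τ : Fin Ts, r k i * pl k i c τ) - Bci N r q pl i c := by
    intro i c hq0
    set Γ := GamQoS (Fintype.card K) Ts (q i c) with hΓdef
    have hΓ0 : 0 ≤ Γ := Real.sqrt_nonneg _
    have hcard : Nat.floor Γ + 1 ≤ Fintype.card ({k // k ∈ N i} × Fin Ts) := by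
      rw [Fintype.card_prod, Fintype.card_coe, Fintype.card_fin]
      exact hfloor i c hq0
    have hθ : ∀ (p : K → I → C → Fin Ts → ℝ), inBox Ts p →
        ∀ a, thetaOf N r p i c a ∈ Set.Icc (0:ℝ) 1 := by
      intro p hbox a
      obtain ⟨hr0, hr1⟩ := hr i a.1.1 a.1.2
      have hp := hbox a.1.1 i c a.2
      simp only [thetaOf, Set.mem_Icc]
      constructor
      · exact mul_nonneg hr0.le hp.1
      · nlinarith [mul_le_mul_of_nonneg_right hr1.le hp.1, hp.2]
    have hθeq : thetaOf N r pl i c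
        = fun b => (1 - lam) * thetaOf N r p' i c b + lam * thetaOf N r pbar i c b := by
      funext b
      simp only [thetaOf, hpl]
      ring
    have hBle : Bci N r q pl i c
        ≤ (1 - lam) * Bci N r q p' i c + lam * Bci N r q pbar i c := by
      unfold Bci
      rw [← hΓdef, hθeq]
      exact protB_combo hΓ0 hcard (hθ p' hbox') (hθ pbar hboxb) hl0 hl1
    have hsum : (∑ k ∈ N i, ∑ τ : Fin Ts, r k i * pl k i c τ)
        = (1 - lam) * (∑ k ∈ N i, ∑ τ : Fin Ts, r k i * p' k i c τ)
          + lam * (∑ k ∈ N i, ∑ τ : Fin Ts, r k i * pbar k i c τ) := by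
      have hmul : ∀ w x y : ℝ, w * ((1 - lam) * x + lam * y)
          = (1 - lam) * (w * x) + lam * (w * y) := fun w x y => by ring
      simp only [hpl, hmul, combo_sum]
    have c1 := hqos' i c hq0
    have c2 := hslater i c hq0
    have hKT : (0:ℝ) ≤ (Fintype.card K : ℝ) * Ts := by positivity
    have hd : γ i c - γ' i c ≤ Δ := by
      have hterm : (if 0 < q i c then |γ' i c - γ i c| else 0) ≤ Δ := by
        rw [hΔdef]
        exact Finset.single_le_sum
          (f := fun ic : I × C => if 0 < q ic.1 ic.2 then |γ' ic.1 ic.2 - γ ic.1 ic.2| else 0)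
          (fun ic _ => by by_cases h : 0 < q ic.1 ic.2 <;> simp [h, abs_nonneg])
          (Finset.mem_univ (i, c))
      rw [if_pos hq0] at hterm
      calc γ i c - γ' i c ≤ |γ' i c - γ i c| := by rw [abs_sub_comm]; exact le_abs_self _
        _ ≤ Δ := hterm
    have key : (1 - lam) * (γ i c - γ' i c) ≤ lam * ζ := by
      nlinarith [hlameq, mul_le_mul_of_nonneg_left hd (show (0:ℝ) ≤ 1 - lam by linarith)]
    have hstep : (Fintype.card K : ℝ) * Ts * γ i c
        ≤ (1 - lam) * ((Fintype.card K : ℝ) * Ts * γ' i c)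
          + lam * ((Fintype.card K : ℝ) * Ts * (γ i c + ζ)) := by
      nlinarith [mul_nonneg hKT (show (0:ℝ) ≤ lam * ζ - (1 - lam) * (γ i c - γ' i c) by
        linarith)]
    have s1 := mul_le_mul_of_nonneg_left c1 (show (0:ℝ) ≤ 1 - lam by linarith)
    have s2 := mul_le_mul_of_nonneg_left c2 hl0
    rw [hsum]
    linarith [hBle, s1, s2, hstep]
  have hfeas : pl ∈ Dtilde N Ts r U γ q := ⟨hboxl, hP1l, hP2l, hqosl⟩
  -- concavity of the objective along the segment
  have hp'box : p' ∈ {p : K → I → C → Fin Ts → ℝ | inBox Ts p} := hbox'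
  have hpbarbox : pbar ∈ {p : K → I → C → Fin Ts → ℝ | inBox Ts p} := hboxb
  have hsmul : (1 - lam) • p' + lam • pbar = pl := by
    funext k i c τ
    simp [hpl, Pi.add_apply, Pi.smul_apply, smul_eq_mul]
  have hconcf : (1 - lam) * f p' + lam * f pbar ≤ f pl := by
    have h := hfconc.2 hp'box hpbarbox (show (0:ℝ) ≤ 1 - lam by linarith) hl0 (by ring)
    rw [hsmul] at h
    simpa [smul_eq_mul] using h
  have hLin : (∑ i, ∑ c, Q i c * (∑ τ : Fin Ts, ∑ k ∈ N i, r k i * pl k i c τ))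
      = (1 - lam) * (∑ i, ∑ c, Q i c * (∑ τ : Fin Ts, ∑ k ∈ N i, r k i * p' k i c τ))
        + lam * (∑ i, ∑ c, Q i c * (∑ τ : Fin Ts, ∑ k ∈ N i, r k i * pbar k i c τ)) := by
    have hmul : ∀ w x y : ℝ, w * ((1 - lam) * x + lam * y)
        = (1 - lam) * (w * x) + lam * (w * y) := fun w x y => by ring
    simp only [hpl, hmul, combo_sum]
  have hhl : (1 - lam) * hobj N r Q V f p' + lam * hobj N r Q V f pbar
      ≤ hobj N r Q V f pl := by
    unfold hobj
    rw [hLin]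
    nlinarith [mul_le_mul_of_nonneg_left hconcf hV.le]
  -- bounds on the objective
  have hLinNonneg : ∀ p : K → I → C → Fin Ts → ℝ, inBox Ts p →
      0 ≤ ∑ i, ∑ c, Q i c * (∑ τ : Fin Ts, ∑ k ∈ N i, r k i * p k i c τ) := by
    intro p hbox
    refine Finset.sum_nonneg fun i _ => Finset.sum_nonneg fun c _ =>
      mul_nonneg (hQ i c) ?_
    exact Finset.sum_nonneg fun τ _ => Finset.sum_nonneg fun k hk =>
      mul_nonneg (hr i k hk).1.le (hbox k i c τ).1
  have hQmax0 : 0 ≤ Qmax := by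
    obtain ⟨i0, c0, hi0⟩ := hQmax.1
    rw [hi0]; exact hQ i0 c0
  have hQle : ∀ i c, Q i c ≤ Qmax := fun i c => hQmax.2 ⟨i, c, rfl⟩
  have hLinUB : ∀ p : K → I → C → Fin Ts → ℝ, inBox Ts p → consP1 N p →
      (∑ i, ∑ c, Q i c * (∑ τ : Fin Ts, ∑ k ∈ N i, r k i * p k i c τ))
        ≤ Qmax * ((Fintype.card K : ℝ) * Ts) := by
    intro p hbox hP1
    have inner_nonneg : ∀ i c, 0 ≤ ∑ τ : Fin Ts, ∑ k ∈ N i, r k i * p k i c τ := fun i c =>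
      Finset.sum_nonneg fun τ _ => Finset.sum_nonneg fun k hk =>
        mul_nonneg (hr i k hk).1.le (hbox k i c τ).1
    have step1 : (∑ i, ∑ c, Q i c * (∑ τ : Fin Ts, ∑ k ∈ N i, r k i * p k i c τ))
        ≤ ∑ i, ∑ c, Qmax * (∑ τ : Fin Ts, ∑ k ∈ N i, r k i * p k i c τ) :=
      Finset.sum_le_sum fun i _ => Finset.sum_le_sum fun c _ =>
        mul_le_mul_of_nonneg_right (hQle i c) (inner_nonneg i c)
    have step2 : (∑ i, ∑ c, ∑ τ : Fin Ts, ∑ k ∈ N i, r k i * p k i c τ)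
        ≤ ∑ i, ∑ c, ∑ τ : Fin Ts, ∑ k ∈ N i, p k i c τ :=
      Finset.sum_le_sum fun i _ => Finset.sum_le_sum fun c _ =>
        Finset.sum_le_sum fun τ _ => Finset.sum_le_sum fun k hk => by
          have hb := hbox k i c τ
          nlinarith [(hr i k hk).1, (hr i k hk).2, hb.1, hb.2]
    have step3 : (∑ i, ∑ c, ∑ τ : Fin Ts, ∑ k ∈ N i, p k i c τ)
        = (Fintype.card K : ℝ) * Ts := by
      have e0 : (∑ i, ∑ c, ∑ τ : Fin Ts, ∑ k ∈ N i, p k i c τ)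
          = ∑ τ : Fin Ts, ∑ i, ∑ c, ∑ k ∈ N i, p k i c τ :=
        calc ∑ i, ∑ c, ∑ τ : Fin Ts, ∑ k ∈ N i, p k i c τ
            = ∑ i, ∑ τ : Fin Ts, ∑ c, ∑ k ∈ N i, p k i c τ :=
              Finset.sum_congr rfl fun i _ => Finset.sum_comm
          _ = ∑ τ : Fin Ts, ∑ i, ∑ c, ∑ k ∈ N i, p k i c τ := Finset.sum_comm
      rw [e0]
      have e1 : ∀ τ : Fin Ts, (∑ i, ∑ c, ∑ k ∈ N i, p k i c τ) = (Fintype.card K : ℝ) := by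
        intro τ
        have h1 : (∑ i, ∑ c, ∑ k ∈ N i, p k i c τ) = ∑ i, ∑ k ∈ N i, ∑ c, p k i c τ :=
          Finset.sum_congr rfl fun i _ => Finset.sum_comm
        rw [h1, sum_swap_mem N]
        refine Eq.trans (Finset.sum_congr rfl fun k _ => ?_)
          (by simp : (∑ _k : K, (1:ℝ)) = (Fintype.card K : ℝ))
        rw [Finset.sum_comm]
        exact hP1 k τ
      rw [Finset.sum_congr rfl fun τ _ => e1 τ]
      simp [mul_comm]
    have factored : (∑ i, ∑ c, Qmax * (∑ τ : Fin Ts, ∑ k ∈ N i, r k i * p k i c τ))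
        = Qmax * (∑ i, ∑ c, ∑ τ : Fin Ts, ∑ k ∈ N i, r k i * p k i c τ) := by
      rw [Finset.mul_sum]
      exact Finset.sum_congr rfl fun i _ => (Finset.mul_sum _ _ _).symm
    have final := mul_le_mul_of_nonneg_left (le_trans step2 (le_of_eq step3)) hQmax0
    linarith [step1, factored, final]
  have hfbar := hfbdd pbar hboxb
  have hfp' := hfbdd p' hbox'
  set M : ℝ := Qmax * ((Fintype.card K : ℝ) * Ts) + V * (fmax - fmin) with hM
  have hM0 : 0 ≤ M := by
    have h1 : fmin ≤ fmax := le_trans hfbar.1 hfbar.2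
    have h2 : 0 ≤ V * (fmax - fmin) := mul_nonneg hV.le (by linarith)
    have h3 : 0 ≤ Qmax * ((Fintype.card K : ℝ) * Ts) :=
      mul_nonneg hQmax0 (by positivity)
    rw [hM]; linarith
  have hdiff : hobj N r Q V f p' - hobj N r Q V f pbar ≤ M := by
    unfold hobj
    have h1 := hLinUB p' hbox' hP1'
    have h2 := hLinNonneg pbar hboxb
    have h3 : V * f p' ≤ V * fmax := mul_le_mul_of_nonneg_left hfp'.2 hV.le
    have h4 : V * fmin ≤ V * f pbar := mul_le_mul_of_nonneg_left hfbar.1 hV.le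
    rw [hM]; nlinarith
  have hle := hpMDPmax pl hfeas
  have hmain : hobj N r Q V f p' - hobj N r Q V f pMDP ≤ lam * M := by
    have h5 : hobj N r Q V f p' - hobj N r Q V f pl
        ≤ lam * (hobj N r Q V f p' - hobj N r Q V f pbar) := by nlinarith [hhl]
    have h6 : lam * (hobj N r Q V f p' - hobj N r Q V f pbar) ≤ lam * M :=
      mul_le_mul_of_nonneg_left hdiff hl0
    linarith [hle]
  have hlamle : lam ≤ Δ / ζ := by
    rw [hlamdef, div_le_div_iff₀ hden hζ]
    nlinarith [mul_nonneg hΔ0 hΔ0]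
  have h7 : lam * M ≤ (Δ / ζ) * M := mul_le_mul_of_nonneg_right hlamle hM0
  have h8 : (Δ / ζ) * M
      = (Qmax * (Fintype.card K : ℝ) * Ts / ζ + V * (fmax - fmin) / ζ) * Δ := by
    rw [hM]
    field_simp
  exact le_trans hmain (le_trans h7 (le_of_eq h8))
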